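/- For any balanced lattice design X ∈ U(n, q^s) with n ≥ 2, the benchmark word-length pattern (0, A_2*, …, A_s*) is dominated by (0, A_2(X), …, A_s(X)) in the aberration partial ordering: either A_j(X) = A_j* for all j = 2, …, s, or the smallest index j ∈ {2, …, s} with A_j(X) ≠ A_j* satisfies A_j* < A_j(X). Here A_j* = (1 − 1/n)[(1 − f) P_j(s − θ; s, q) + f P_j(s − θ − 1; s, q)] + (q−1)^j C(s, j)/n, with β̄ = s(n−q)/(q(n−1)), θ = ⌊β̄⌋, f = β̄ − θ. -/

import Mathlib

open Finset

/-- A design `X ∈ U(n, q^s)` is balanced: `q ∣ n` and every level occurs exactly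
`n / q` times in each column. -/
def IsBalanced {n s q : ℕ} (X : Fin n → Fin s → Fin q) : Prop :=
  q ∣ n ∧ ∀ (j : Fin s) (ℓ : Fin q),
    (univ.filter fun i => X i j = ℓ).card = n / q

/-- The contrast χ_v(X) = ∑_i ∏_j ω^{v_j x_{ij}}, with ω = exp(2πi/q). -/
noncomputable def contrast {n s q : ℕ} (X : Fin n → Fin s → Fin q)
    (v : Fin s → Fin q) : ℂ :=
  ∑ i, ∏ j, Complex.exp (2 * (Real.pi : ℂ) * Complex.I / (q : ℂ)) ^ ((v j : ℕ) * (X i j : ℕ))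

/-- The weight wt(v) = #{j : v_j ≠ 0}. -/
def wt {s q : ℕ} (v : Fin s → Fin q) : ℕ :=
  (univ.filter fun j => (v j : ℕ) ≠ 0).card

/-- The generalized word-length pattern A_k(X) = n⁻² ∑_{wt(v)=k} |χ_v(X)|². -/
noncomputable def wlp {n s q : ℕ} (X : Fin n → Fin s → Fin q) (k : ℕ) : ℝ :=
  (∑ v ∈ univ.filter (fun v : Fin s → Fin q => wt v = k),
    ‖contrast X v‖ ^ 2) / (n : ℝ) ^ 2

/-- The Krawtchouk polynomial P_j(l; s, q) = ∑_{w=0}^{j} (−1)^w (q−1)^{j−w} C(l,w) C(s−l,j−w). -/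
noncomputable def krawtchouk (s q j l : ℕ) : ℝ :=
  ∑ w ∈ range (j + 1),
    (-1 : ℝ) ^ w * ((q : ℝ) - 1) ^ (j - w) * (l.choose w : ℝ) * ((s - l).choose (j - w) : ℝ)

/-- The benchmark word-length pattern value
A_j* = (1 − 1/n)[(1 − f) P_j(s−θ; s, q) + f P_j(s−θ−1; s, q)] + (q−1)ʲ C(s,j)/n. -/
noncomputable def wlpBenchmark (n s q : ℕ) (θ : ℕ) (f : ℝ) (j : ℕ) : ℝ :=
  (1 - 1 / (n : ℝ)) *
      ((1 - f) * krawtchouk s q j (s - θ) + f * krawtchouk s q j (s - θ - 1))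
    + ((q : ℝ) - 1) ^ j * (s.choose j : ℝ) / n

noncomputable def zq (q : ℕ) : ℂ := Complex.exp (2 * (Real.pi : ℂ) * Complex.I / (q : ℂ))

lemma zq_prim {q : ℕ} (hq : q ≠ 0) : IsPrimitiveRoot (zq q) q :=
  Complex.isPrimitiveRoot_exp q hq

lemma zq_ne_zero (q : ℕ) : zq q ≠ 0 := Complex.exp_ne_zero _

lemma zq_conj (q : ℕ) : (starRingEnd ℂ) (zq q) = (zq q)⁻¹ := by
  rw [zq, ← Complex.exp_conj, ← Complex.exp_neg]
  congr 1
  simp [map_div₀, Complex.conj_I]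
  ring_nf
  simp [Complex.conj_ofNat]
  ring

lemma geom_zero {u : ℂ} {q : ℕ} (hu : u ≠ 1) (huq : u ^ q = 1) :
    ∑ a : Fin q, u ^ (a : ℕ) = 0 := by
  rw [Fin.sum_univ_eq_sum_range (fun i => u ^ i) q, geom_sum_eq hu, huq]
  simp

lemma coord_sum {q : ℕ} (hq : 2 ≤ q) (x : ℝ) (y z : Fin q) :
    ∑ a : Fin q, ((if (a : ℕ) ≠ 0 then (x : ℂ) else 1) *
      (zq q ^ ((a : ℕ) * (y : ℕ)) * (starRingEnd ℂ) (zq q ^ ((a : ℕ) * (z : ℕ))))) =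
      if y = z then 1 + ((q : ℂ) - 1) * x else 1 - x := by
  have hq0 : q ≠ 0 := by omega
  haveI : NeZero q := ⟨hq0⟩
  set u : ℂ := zq q ^ (y : ℕ) * ((zq q) ^ (z : ℕ))⁻¹ with hu
  have hzq : zq q ^ q = 1 := (zq_prim hq0).pow_eq_one
  have huq : u ^ q = 1 := by
    rw [hu, mul_pow, inv_pow, ← pow_mul, ← pow_mul, mul_comm (y:ℕ) q, mul_comm (z:ℕ) q,
      pow_mul, pow_mul, hzq, one_pow, one_pow, inv_one, mul_one]
  have hterm : ∀ a : Fin q,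
      (if (a : ℕ) ≠ 0 then (x : ℂ) else 1) *
        (zq q ^ ((a : ℕ) * (y : ℕ)) * (starRingEnd ℂ) (zq q ^ ((a : ℕ) * (z : ℕ))))
      = (x : ℂ) * u ^ (a : ℕ) + (if (a : ℕ) = 0 then 1 - (x : ℂ) else 0) := by
    intro a
    have : zq q ^ ((a : ℕ) * (y : ℕ)) * (starRingEnd ℂ) (zq q ^ ((a : ℕ) * (z : ℕ)))
        = u ^ (a : ℕ) := by
      rw [map_pow, zq_conj, hu, mul_pow, ← pow_mul, inv_pow, inv_pow, ← pow_mul,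
        mul_comm (y:ℕ) (a:ℕ), mul_comm (z:ℕ) (a:ℕ)]
    rw [this]
    by_cases h : (a : ℕ) = 0
    · simp [h]
    · simp [h]
  rw [Finset.sum_congr rfl (fun a _ => hterm a), Finset.sum_add_distrib, ← Finset.mul_sum]
  have h2 : ∑ a : Fin q, (if (a : ℕ) = 0 then 1 - (x : ℂ) else 0) = 1 - (x : ℂ) := by
    rw [Finset.sum_eq_single (0 : Fin q)]
    · simp
    · intro b _ hb
      have : (b : ℕ) ≠ 0 := fun h => hb (Fin.ext (by simpa using h))
      simp [this]
    · simp
  rw [h2]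
  by_cases hyz : y = z
  · have hu1 : u = 1 := by
      rw [hu, hyz, mul_inv_cancel₀ (pow_ne_zero _ (zq_ne_zero q))]
    simp only [hyz, if_pos rfl, hu1, one_pow]
    rw [Finset.sum_const, card_univ, Fintype.card_fin]
    push_cast
    ring
  · have hu1 : u ≠ 1 := by
      intro h
      apply hyz
      have : zq q ^ (y : ℕ) = zq q ^ (z : ℕ) := by
        have := h
        rw [hu, ← div_eq_mul_inv, div_eq_one_iff_eq (pow_ne_zero _ (zq_ne_zero q))] at this
        exact this
      exact Fin.ext ((zq_prim hq0).pow_inj y.isLt z.isLt this)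
    rw [geom_zero hu1 huq]
    simp [hyz]


def coin {n s q : ℕ} (X : Fin n → Fin s → Fin q) (i k : Fin n) : ℕ :=
  (univ.filter fun t => X i t = X k t).card

noncomputable def Kw {n s q : ℕ} (X : Fin n → Fin s → Fin q) (j : ℕ) : ℝ :=
  ∑ v ∈ univ.filter (fun v : Fin s → Fin q => wt v = j), ‖contrast X v‖ ^ 2

lemma contrast_eq {n s q : ℕ} (X : Fin n → Fin s → Fin q) (v : Fin s → Fin q) :
    contrast X v = ∑ i, ∏ t, zq q ^ ((v t : ℕ) * (X i t : ℕ)) := rfl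

lemma wt_le {s q : ℕ} (v : Fin s → Fin q) : wt v ≤ s := by
  simpa [wt] using (Finset.card_filter_le univ (fun j => (v j : ℕ) ≠ 0))

lemma coin_le {n s q : ℕ} (X : Fin n → Fin s → Fin q) (i k : Fin n) : coin X i k ≤ s := by
  simpa [coin] using (Finset.card_filter_le univ (fun t => X i t = X k t))

lemma coin_self {n s q : ℕ} (X : Fin n → Fin s → Fin q) (i : Fin n) : coin X i i = s := by
  simp [coin]

lemma gf_design {n s q : ℕ} (hq : 2 ≤ q) (X : Fin n → Fin s → Fin q) (x : ℝ) :
    ∑ j ∈ range (s + 1), Kw X j * x ^ j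
      = ∑ i : Fin n, ∑ k : Fin n,
          (1 + ((q : ℝ) - 1) * x) ^ coin X i k * (1 - x) ^ (s - coin X i k) := by
  have step1 : ∑ j ∈ range (s + 1), Kw X j * x ^ j
      = ∑ v : Fin s → Fin q, ‖contrast X v‖ ^ 2 * x ^ wt v := by
    rw [← Finset.sum_fiberwise_of_maps_to
      (fun v _ => Finset.mem_range.2 (Nat.lt_succ_of_le (wt_le v)))
      (fun v => ‖contrast X v‖ ^ 2 * x ^ wt v)]
    refine Finset.sum_congr rfl fun j _ => ?_
    rw [Kw, Finset.sum_mul]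
    refine Finset.sum_congr rfl fun v hv => ?_
    rw [(Finset.mem_filter.1 hv).2]
  rw [step1]
  apply Complex.ofReal_injective
  push_cast
  have habs : ∀ z : ℂ, ((‖z‖ : ℂ)) ^ 2 = z * (starRingEnd ℂ) z := fun z => by
    rw [← Complex.ofReal_pow, Complex.sq_norm, Complex.mul_conj]
  have key : ∀ v : Fin s → Fin q,
      ((‖contrast X v‖ : ℂ)) ^ 2 * (x : ℂ) ^ wt v
      = ∑ i : Fin n, ∑ k : Fin n, ∏ t : Fin s,
          ((if (v t : ℕ) ≠ 0 then (x : ℂ) else 1) *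
            (zq q ^ ((v t : ℕ) * (X i t : ℕ)) *
              (starRingEnd ℂ) (zq q ^ ((v t : ℕ) * (X k t : ℕ))))) := by
    intro v
    rw [habs, contrast_eq, map_sum, Finset.sum_mul_sum, Finset.sum_mul]
    refine Finset.sum_congr rfl fun i _ => ?_
    rw [Finset.sum_mul]
    refine Finset.sum_congr rfl fun k _ => ?_
    have hxwt : (x : ℂ) ^ wt v = ∏ t : Fin s, (if (v t : ℕ) ≠ 0 then (x : ℂ) else 1) := by
      rw [wt, Finset.prod_ite, Finset.prod_const, Finset.prod_const, one_pow, mul_one]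
    rw [map_prod, ← Finset.prod_mul_distrib, hxwt, ← Finset.prod_mul_distrib]
    exact Finset.prod_congr rfl fun t _ => by ring
  rw [Finset.sum_congr rfl fun v _ => key v]
  rw [Finset.sum_comm]
  refine Finset.sum_congr rfl fun i _ => ?_
  rw [Finset.sum_comm]
  refine Finset.sum_congr rfl fun k _ => ?_
  rw [← Fintype.piFinset_univ]
  rw [(Finset.prod_univ_sum (fun _ : Fin s => (univ : Finset (Fin q)))
    (fun t a => ((if (a : ℕ) ≠ 0 then (x : ℂ) else 1) *
      (zq q ^ ((a : ℕ) * (X i t : ℕ)) *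
        (starRingEnd ℂ) (zq q ^ ((a : ℕ) * (X k t : ℕ))))))).symm]
  have : ∀ t : Fin s,
      (∑ a : Fin q, ((if (a : ℕ) ≠ 0 then (x : ℂ) else 1) *
        (zq q ^ ((a : ℕ) * (X i t : ℕ)) *
          (starRingEnd ℂ) (zq q ^ ((a : ℕ) * (X k t : ℕ))))))
      = if X i t = X k t then 1 + ((q : ℂ) - 1) * x else 1 - x :=
    fun t => coord_sum hq x (X i t) (X k t)
  rw [Finset.prod_congr rfl fun t _ => this t, Finset.prod_ite, Finset.prod_const,
    Finset.prod_const]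
  have hcard : (univ.filter fun t => ¬ X i t = X k t).card = s - coin X i k := by
    have h1 : coin X i k + (univ.filter fun t => ¬ X i t = X k t).card = s := by
      rw [coin]
      have := Finset.card_filter_add_card_filter_not (s := (univ : Finset (Fin s)))
        (p := fun t => X i t = X k t)
      simpa using this
    omega
  rw [hcard, coin]


lemma kraw_gf {q : ℕ} {s d : ℕ} (hds : d ≤ s) (x : ℝ) :
    ∑ j ∈ range (s + 1), krawtchouk s q j d * x ^ j
      = (1 - x) ^ d * (1 + ((q : ℝ) - 1) * x) ^ (s - d) := by
  set a : ℕ → ℝ := fun w => (-1 : ℝ) ^ w * (d.choose w : ℝ) with ha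
  set b : ℕ → ℝ := fun u => ((q : ℝ) - 1) ^ u * ((s - d).choose u : ℝ) with hb
  have ha0 : ∀ w, d < w → a w = 0 := fun w h => by
    simp [ha, Nat.choose_eq_zero_of_lt h]
  have hb0 : ∀ u, s - d < u → b u = 0 := fun u h => by
    simp [hb, Nat.choose_eq_zero_of_lt h]
  have h1 : (1 - x) ^ d = ∑ w ∈ range (s + 1), a w * x ^ w := by
    have : (1 - x) ^ d = ∑ w ∈ range (d + 1), a w * x ^ w := by
      rw [sub_eq_add_neg, add_comm, add_pow]
      refine Finset.sum_congr rfl fun w _ => ?_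
      rw [neg_pow]
      simp [ha]; ring
    rw [this]
    exact Finset.sum_subset (Finset.range_subset_range.2 (by omega)) fun w _ hw => by
      rw [ha0 w (by simpa using hw), zero_mul]
  have h2 : (1 + ((q : ℝ) - 1) * x) ^ (s - d) = ∑ u ∈ range (s + 1), b u * x ^ u := by
    have : (1 + ((q : ℝ) - 1) * x) ^ (s - d) = ∑ u ∈ range (s - d + 1), b u * x ^ u := by
      rw [add_comm, add_pow]
      refine Finset.sum_congr rfl fun u _ => ?_
      rw [mul_pow]
      simp [hb]; ring
    rw [this]
    exact Finset.sum_subset (Finset.range_subset_range.2 (by omega)) fun u _ hu => by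
      rw [hb0 u (by simpa using hu), zero_mul]
  rw [h1, h2, Finset.sum_mul_sum]
  have hkraw : ∀ j, krawtchouk s q j d = ∑ w ∈ range (j + 1), a w * b (j - w) := by
    intro j
    refine Finset.sum_congr rfl fun w _ => ?_
    simp only [ha, hb]; ring
  calc ∑ j ∈ range (s + 1), krawtchouk s q j d * x ^ j
      = ∑ j ∈ range (s + 1), ∑ w ∈ range (j + 1), a w * b (j - w) * x ^ j := by
        refine Finset.sum_congr rfl fun j _ => ?_
        rw [hkraw, Finset.sum_mul]
    _ = ∑ p ∈ (range (s + 1)).sigma (fun j => range (j + 1)),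
          a p.2 * b (p.1 - p.2) * x ^ p.1 :=
        Finset.sum_sigma' _ _ _
    _ = ∑ p ∈ (range (s + 1) ×ˢ range (s + 1)).filter (fun p => p.1 + p.2 ≤ s),
          (a p.1 * x ^ p.1) * (b p.2 * x ^ p.2) := by
        refine Finset.sum_nbij' (fun p => (p.2, p.1 - p.2)) (fun p => ⟨p.1 + p.2, p.1⟩)
          ?_ ?_ ?_ ?_ ?_
        · rintro ⟨j, w⟩ hp
          simp only [Finset.mem_sigma, Finset.mem_range] at hp
          simp only [Finset.mem_filter, Finset.mem_product, Finset.mem_range]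
          omega
        · rintro ⟨w, u⟩ hp
          simp only [Finset.mem_filter, Finset.mem_product, Finset.mem_range] at hp
          simp only [Finset.mem_sigma, Finset.mem_range]
          omega
        · rintro ⟨j, w⟩ hp
          simp only [Finset.mem_sigma, Finset.mem_range] at hp
          have hj : w + (j - w) = j := by omega
          simp only
          rw [hj]
        · rintro ⟨w, u⟩ hp
          simp only [Finset.mem_filter, Finset.mem_product, Finset.mem_range] at hp
          have hu : w + u - w = u := by omega
          simp [hu]
        · rintro ⟨j, w⟩ hp
          simp only [Finset.mem_sigma, Finset.mem_range] at hp
          have hwj : w ≤ j := by omega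
          have hx : x ^ w * x ^ (j - w) = x ^ j := by
            rw [← pow_add, Nat.add_sub_cancel' hwj]
          simp only
          rw [← hx]
          ring
    _ = ∑ p ∈ range (s + 1) ×ˢ range (s + 1), (a p.1 * x ^ p.1) * (b p.2 * x ^ p.2) := by
        refine Finset.sum_subset (Finset.filter_subset _ _) fun p hp hnp => ?_
        simp only [Finset.mem_filter, Finset.mem_product, Finset.mem_range] at hp hnp
        have : d < p.1 ∨ s - d < p.2 := by
          by_contra hc
          push_neg at hc
          exact hnp ⟨hp, by omega⟩
        rcases this with h | h
        · rw [ha0 _ h]; ring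
        · rw [hb0 _ h]; ring
    _ = ∑ w ∈ range (s + 1), ∑ u ∈ range (s + 1), (a w * x ^ w) * (b u * x ^ u) :=
        Finset.sum_product _ _ _


lemma kraw_d0 {s q : ℕ} (j : ℕ) :
    krawtchouk s q j 0 = ((q : ℝ) - 1) ^ j * (s.choose j : ℝ) := by
  rw [krawtchouk, Finset.sum_eq_single 0]
  · simp
  · intro w _ hw
    rw [Nat.choose_eq_zero_of_lt (Nat.pos_of_ne_zero hw)]
    simp
  · simp
lemma kraw_j0 {s q : ℕ} (l : ℕ) : krawtchouk s q 0 l = 1 := by simp [krawtchouk]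

lemma kraw_j1 {s q : ℕ} (l : ℕ) :
    krawtchouk s q 1 l = ((q : ℝ) - 1) * ((s - l : ℕ) : ℝ) - (l : ℝ) := by
  rw [krawtchouk, Finset.sum_range_succ, Finset.sum_range_succ, Finset.sum_range_zero]
  simp [Nat.choose_one_right]
  ring

lemma gf_bench {n s q θ : ℕ} (f : ℝ) (hθs : θ + 1 ≤ s) (x : ℝ) :
    ∑ j ∈ range (s + 1), wlpBenchmark n s q θ f j * x ^ j
      = (1 - 1 / (n : ℝ)) *
          ((1 - f) * ((1 - x) ^ (s - θ) * (1 + ((q : ℝ) - 1) * x) ^ θ)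
            + f * ((1 - x) ^ (s - θ - 1) * (1 + ((q : ℝ) - 1) * x) ^ (θ + 1)))
        + (1 + ((q : ℝ) - 1) * x) ^ s / n := by
  have expand : ∀ j, wlpBenchmark n s q θ f j * x ^ j =
      (1 - 1 / (n : ℝ)) * (1 - f) * (krawtchouk s q j (s - θ) * x ^ j)
      + (1 - 1 / (n : ℝ)) * f * (krawtchouk s q j (s - θ - 1) * x ^ j)
      + (1 / (n : ℝ)) * (krawtchouk s q j 0 * x ^ j) := by
    intro j
    rw [kraw_d0, wlpBenchmark]
    ring
  rw [Finset.sum_congr rfl fun j _ => expand j, Finset.sum_add_distrib,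
    Finset.sum_add_distrib, ← Finset.mul_sum, ← Finset.mul_sum, ← Finset.mul_sum,
    kraw_gf (by omega : s - θ ≤ s) x, kraw_gf (by omega : s - θ - 1 ≤ s) x,
    kraw_gf (by omega : 0 ≤ s) x]
  rw [show s - (s - θ) = θ by omega, show s - (s - θ - 1) = θ + 1 by omega,
    Nat.sub_zero]
  ring


lemma sum_coin {n s q : ℕ} {X : Fin n → Fin s → Fin q} (hX : IsBalanced X) :
    ∑ i : Fin n, ∑ k : Fin n, coin X i k = n * (s * (n / q)) := by
  have hrow : ∀ i : Fin n, ∑ k : Fin n, coin X i k = s * (n / q) := by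
    intro i
    have : ∀ k : Fin n, coin X i k = ∑ t : Fin s, if X k t = X i t then 1 else 0 := by
      intro k
      rw [coin, Finset.card_filter]
      exact Finset.sum_congr rfl fun t _ => by simp [eq_comm]
    rw [Finset.sum_congr rfl fun k _ => this k, Finset.sum_comm]
    have : ∀ t : Fin s, ∑ k : Fin n, (if X k t = X i t then 1 else 0) = n / q := by
      intro t
      rw [← Finset.card_filter]
      exact hX.2 t (X i t)
    rw [Finset.sum_congr rfl fun t _ => this t, Finset.sum_const, Finset.card_univ,
      Fintype.card_fin, smul_eq_mul, mul_comm]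
  rw [Finset.sum_congr rfl fun i _ => hrow i, Finset.sum_const, Finset.card_univ,
    Fintype.card_fin, smul_eq_mul]

lemma Kw_zero {n s q : ℕ} (hq : 2 ≤ q) (X : Fin n → Fin s → Fin q) :
    Kw X 0 = (n : ℝ) ^ 2 := by
  haveI : NeZero q := ⟨by omega⟩
  have hfilter : (univ.filter fun v : Fin s → Fin q => wt v = 0)
      = {fun _ => (0 : Fin q)} := by
    ext v
    simp only [Finset.mem_filter, Finset.mem_univ, true_and, Finset.mem_singleton]
    unfold wt
    constructor
    · intro h
      funext t
      by_contra hne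
      have hv : (v t : ℕ) ≠ 0 := fun h0 => hne (Fin.ext (by simpa using h0))
      have hmem : t ∈ univ.filter fun j => (v j : ℕ) ≠ 0 := by simp [hv, hne]
      rw [Finset.card_eq_zero.1 h] at hmem
      exact absurd hmem (Finset.notMem_empty t)
    · intro h
      rw [h]
      simp
  rw [Kw, hfilter, Finset.sum_singleton]
  have : contrast X (fun _ => (0 : Fin q)) = (n : ℂ) := by
    rw [contrast_eq]
    simp
  rw [this]
  simp

lemma Kw_one {n s q : ℕ} (hq : 2 ≤ q) {X : Fin n → Fin s → Fin q}
    (hX : IsBalanced X) : Kw X 1 = 0 := by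
  have hq0 : q ≠ 0 := by omega
  apply Finset.sum_eq_zero
  intro v hv
  have hwt : wt v = 1 := (Finset.mem_filter.1 hv).2
  obtain ⟨t₀, ht₀⟩ := Finset.card_eq_one.1 hwt
  have hmem : ∀ t : Fin s, (v t : ℕ) ≠ 0 ↔ t = t₀ := by
    intro t
    constructor
    · intro h
      have : t ∈ univ.filter fun j => (v j : ℕ) ≠ 0 := by simp [h]
      rw [ht₀] at this
      simpa using this
    · intro h
      have : t₀ ∈ univ.filter fun j => (v j : ℕ) ≠ 0 := by rw [ht₀]; simp
      rw [h]
      simpa using this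
  have ha0 : (v t₀ : ℕ) ≠ 0 := (hmem t₀).2 rfl
  have hcontrast : contrast X v = 0 := by
    rw [contrast_eq]
    have hprod : ∀ i : Fin n, ∏ t : Fin s, zq q ^ ((v t : ℕ) * (X i t : ℕ))
        = zq q ^ ((v t₀ : ℕ) * (X i t₀ : ℕ)) := by
      intro i
      apply Finset.prod_eq_single t₀
      · intro t _ ht
        have : (v t : ℕ) = 0 := by
          by_contra h
          exact ht ((hmem t).1 h)
        simp [this]
      · simp
    rw [Finset.sum_congr rfl fun i _ => hprod i]
    have hgroup : ∑ i : Fin n, zq q ^ ((v t₀ : ℕ) * (X i t₀ : ℕ))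
        = ∑ ℓ : Fin q, ((n / q : ℕ) : ℂ) * zq q ^ ((v t₀ : ℕ) * (ℓ : ℕ)) := by
      rw [← Finset.sum_fiberwise_of_maps_to (fun i _ => Finset.mem_univ (X i t₀))
        (fun i => zq q ^ ((v t₀ : ℕ) * (X i t₀ : ℕ)))]
      refine Finset.sum_congr rfl fun ℓ _ => ?_
      rw [Finset.sum_congr rfl (fun i hi => by
        rw [(Finset.mem_filter.1 hi).2]), Finset.sum_const, hX.2 t₀ ℓ, nsmul_eq_mul]
    rw [hgroup, ← Finset.mul_sum]
    have : ∑ ℓ : Fin q, zq q ^ ((v t₀ : ℕ) * (ℓ : ℕ)) = 0 := by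
      have hrw : ∀ ℓ : Fin q, zq q ^ ((v t₀ : ℕ) * (ℓ : ℕ))
          = (zq q ^ (v t₀ : ℕ)) ^ (ℓ : ℕ) := fun ℓ => by rw [← pow_mul]
      rw [Finset.sum_congr rfl fun ℓ _ => hrw ℓ]
      apply geom_zero
      · intro h
        exact ha0 ((zq_prim hq0).pow_inj (v t₀).isLt (by omega)
          (by simpa using h))
      · rw [← pow_mul, mul_comm, pow_mul, (zq_prim hq0).pow_eq_one, one_pow]
    rw [this, mul_zero]
  simp [hcontrast]

lemma pow_step {a b : ℝ} {m s : ℕ} (hm : m + 1 ≤ s) :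
    a ^ (m + 1) * b ^ (s - (m + 1)) = a ^ m * b ^ (s - m) + a ^ m * b ^ (s - m - 1) * (a - b) := by
  rw [pow_succ, show s - m = s - (m + 1) + 1 by omega, pow_succ]
  simp only [Nat.add_sub_cancel]
  ring

lemma step_mono {a b : ℝ} (hb : 0 < b) (hba : b ≤ a) {m m' s : ℕ} (hmm : m ≤ m')
    (hm' : m' + 1 ≤ s) : a ^ m * b ^ (s - m - 1) ≤ a ^ m' * b ^ (s - m' - 1) := by
  have ha : 0 < a := lt_of_lt_of_le hb hba
  have h1 : s - m - 1 = (s - m' - 1) + (m' - m) := by omega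
  have h3 : a ^ m * a ^ (m' - m) = a ^ m' := by
    rw [← pow_add]
    congr 1
    omega
  calc a ^ m * b ^ (s - m - 1) = (a ^ m * b ^ (s - m' - 1)) * b ^ (m' - m) := by
        rw [h1, pow_add]; ring
    _ ≤ (a ^ m * b ^ (s - m' - 1)) * a ^ (m' - m) :=
        mul_le_mul_of_nonneg_left (pow_le_pow_left₀ hb.le hba _) (by positivity)
    _ = a ^ m' * b ^ (s - m' - 1) := by rw [← h3]; ring

lemma secant {a b : ℝ} (hb : 0 < b) (hba : b ≤ a) {s θ β : ℕ} (hβ : β ≤ s) (hθ : θ + 1 ≤ s) :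
    a ^ θ * b ^ (s - θ) + ((β : ℝ) - (θ : ℝ)) * (a ^ (θ + 1) * b ^ (s - θ - 1) - a ^ θ * b ^ (s - θ))
      ≤ a ^ β * b ^ (s - β) := by
  have ha : 0 < a := lt_of_lt_of_le hb hba
  set D : ℝ := a ^ θ * b ^ (s - θ - 1) * (a - b) with hD
  have hDnn : 0 ≤ D := by
    have : 0 ≤ a - b := sub_nonneg.2 hba
    positivity
  have hDeq : a ^ (θ + 1) * b ^ (s - θ - 1) - a ^ θ * b ^ (s - θ) = D := by
    rw [show s - θ - 1 = s - (θ + 1) by omega] at hD ⊢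
    rw [pow_step hθ, hD, show s - θ - 1 = s - (θ + 1) by omega]
    ring
  rw [hDeq]
  have up : ∀ k : ℕ, θ + k ≤ s →
      a ^ θ * b ^ (s - θ) + (k : ℝ) * D ≤ a ^ (θ + k) * b ^ (s - (θ + k)) := by
    intro k
    induction k with
    | zero => intro _; simp
    | succ k ih =>
      intro hk
      have ihh := ih (by omega)
      have hstep : D ≤ a ^ (θ + k) * b ^ (s - (θ + k) - 1) * (a - b) := by
        apply mul_le_mul_of_nonneg_right _ (sub_nonneg.2 hba)
        have := step_mono hb hba (Nat.le_add_right θ k) (by omega : (θ + k) + 1 ≤ s)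
        simpa using this
      have hps := pow_step (by omega : (θ + k) + 1 ≤ s) (a := a) (b := b)
      push_cast
      calc a ^ θ * b ^ (s - θ) + ((k : ℝ) + 1) * D
          = (a ^ θ * b ^ (s - θ) + (k : ℝ) * D) + D := by ring
        _ ≤ a ^ (θ + k) * b ^ (s - (θ + k)) + a ^ (θ + k) * b ^ (s - (θ + k) - 1) * (a - b) :=
            add_le_add ihh hstep
        _ = a ^ (θ + (k + 1)) * b ^ (s - (θ + (k + 1))) := by
            rw [show θ + (k + 1) = (θ + k) + 1 by omega, hps]
  have down : ∀ k : ℕ, k ≤ θ →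
      a ^ θ * b ^ (s - θ) ≤ a ^ (θ - k) * b ^ (s - (θ - k)) + (k : ℝ) * D := by
    intro k
    induction k with
    | zero => intro _; simp
    | succ k ih =>
      intro hk
      have ihh := ih (by omega)
      have hps := pow_step (by omega : (θ - k - 1) + 1 ≤ s) (a := a) (b := b)
      have hstep : a ^ (θ - k - 1) * b ^ (s - (θ - k - 1) - 1) * (a - b) ≤ D := by
        apply mul_le_mul_of_nonneg_right _ (sub_nonneg.2 hba)
        exact step_mono hb hba (by omega : θ - k - 1 ≤ θ) hθ
      push_cast
      calc a ^ θ * b ^ (s - θ)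
          ≤ a ^ (θ - k) * b ^ (s - (θ - k)) + (k : ℝ) * D := ihh
        _ = (a ^ (θ - k - 1) * b ^ (s - (θ - k - 1))
              + a ^ (θ - k - 1) * b ^ (s - (θ - k - 1) - 1) * (a - b)) + (k : ℝ) * D := by
            rw [← hps, show (θ - k - 1) + 1 = θ - k by omega]
        _ ≤ (a ^ (θ - k - 1) * b ^ (s - (θ - k - 1)) + D) + (k : ℝ) * D :=
            add_le_add (add_le_add le_rfl hstep) le_rfl
        _ = a ^ (θ - (k + 1)) * b ^ (s - (θ - (k + 1))) + ((k : ℝ) + 1) * D := by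
            rw [show θ - (k + 1) = θ - k - 1 by omega]
            ring
  rcases le_or_gt θ β with hc | hc
  · have hup := up (β - θ) (by omega)
    rw [show θ + (β - θ) = β by omega] at hup
    have hcast : ((β - θ : ℕ) : ℝ) = (β : ℝ) - (θ : ℝ) := by
      push_cast [Nat.cast_sub hc]
      ring
    rw [hcast] at hup
    exact hup
  · have hdown := down (θ - β) (by omega)
    rw [show θ - (θ - β) = β by omega] at hdown
    have hcast : ((θ - β : ℕ) : ℝ) = (θ : ℝ) - (β : ℝ) := by
      push_cast [Nat.cast_sub hc.le]
      ring
    rw [hcast] at hdown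
    nlinarith [hdown]


lemma wlp_eq_Kw {n s q : ℕ} (X : Fin n → Fin s → Fin q) (j : ℕ) :
    wlp X j = Kw X j / (n : ℝ) ^ 2 := rfl

lemma key_ineq {n s q : ℕ} (hq : 2 ≤ q) (hn : 2 ≤ n) (hs : 2 ≤ s)
    {X : Fin n → Fin s → Fin q} (hX : IsBalanced X)
    {βbar : ℝ} (hβbar : βbar = (s : ℝ) * ((n : ℝ) - q) / ((q : ℝ) * ((n : ℝ) - 1)))
    {θ : ℕ} (hθ : θ = ⌊βbar⌋₊) {f : ℝ} (hf : f = βbar - θ) (hθs : θ + 1 ≤ s)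
    {a b : ℝ} (hb : 0 < b) (hba : b ≤ a) :
    (n : ℝ) * ((n : ℝ) - 1) *
        ((1 - f) * (a ^ θ * b ^ (s - θ)) + f * (a ^ (θ + 1) * b ^ (s - θ - 1)))
      + (n : ℝ) * a ^ s
      ≤ ∑ i : Fin n, ∑ k : Fin n, a ^ coin X i k * b ^ (s - coin X i k) := by
  have hqn : q ≤ n := Nat.le_of_dvd (by omega) hX.1
  have hq0 : (q : ℝ) ≠ 0 := by positivity
  have hn0 : (n : ℝ) ≠ 0 := by positivity
  have hn1 : (n : ℝ) - 1 ≠ 0 := by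
    have : (2 : ℝ) ≤ n := by exact_mod_cast hn
    nlinarith
  set D : ℝ := a ^ (θ + 1) * b ^ (s - θ - 1) - a ^ θ * b ^ (s - θ) with hD
  -- split diagonal
  have hsplit : ∑ i : Fin n, ∑ k : Fin n, a ^ coin X i k * b ^ (s - coin X i k)
      = (∑ i : Fin n, ∑ k ∈ univ.erase i, a ^ coin X i k * b ^ (s - coin X i k))
        + (n : ℝ) * a ^ s := by
    have : ∀ i : Fin n, ∑ k : Fin n, a ^ coin X i k * b ^ (s - coin X i k)
        = (∑ k ∈ univ.erase i, a ^ coin X i k * b ^ (s - coin X i k)) + a ^ s := by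
      intro i
      rw [← Finset.sum_erase_add univ _ (Finset.mem_univ i), coin_self, Nat.sub_self,
        pow_zero, mul_one]
    rw [Finset.sum_congr rfl fun i _ => this i, Finset.sum_add_distrib, Finset.sum_const,
      Finset.card_univ, Fintype.card_fin, nsmul_eq_mul]
  rw [hsplit]
  have hper : ∀ i : Fin n, ∀ k : Fin n,
      a ^ θ * b ^ (s - θ) + ((coin X i k : ℝ) - θ) * D
        ≤ a ^ coin X i k * b ^ (s - coin X i k) :=
    fun i k => secant hb hba (coin_le X i k) hθs
  have hsumbound : ∑ i : Fin n, ∑ k ∈ univ.erase i,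
        (a ^ θ * b ^ (s - θ) + ((coin X i k : ℝ) - θ) * D)
      ≤ ∑ i : Fin n, ∑ k ∈ univ.erase i, a ^ coin X i k * b ^ (s - coin X i k) :=
    Finset.sum_le_sum fun i _ => Finset.sum_le_sum fun k _ => hper i k
  -- compute lower bound sum
  have hcoff : ∑ i : Fin n, ∑ k ∈ univ.erase i, (coin X i k : ℝ)
      = (n : ℝ) * (s : ℝ) * ((n : ℝ) / q) - (n : ℝ) * s := by
    have htot : ∑ i : Fin n, ∑ k : Fin n, (coin X i k : ℝ) = (n : ℝ) * ((s : ℝ) * ((n : ℝ) / q)) := by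
      have := sum_coin hX
      have hcast := congrArg (fun m : ℕ => (m : ℝ)) this
      push_cast at hcast
      rw [hcast, Nat.cast_div hX.1 hq0]
      try push_cast
      try ring
    have hsplit2 : ∀ i : Fin n, ∑ k : Fin n, (coin X i k : ℝ)
        = (∑ k ∈ univ.erase i, (coin X i k : ℝ)) + s := by
      intro i
      rw [← Finset.sum_erase_add univ _ (Finset.mem_univ i), coin_self]
    rw [Finset.sum_congr rfl fun i _ => hsplit2 i, Finset.sum_add_distrib, Finset.sum_const,
      Finset.card_univ, Fintype.card_fin, nsmul_eq_mul] at htot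
    nlinarith [htot]
  have hlower : ∑ i : Fin n, ∑ k ∈ univ.erase i,
        (a ^ θ * b ^ (s - θ) + ((coin X i k : ℝ) - θ) * D)
      = (n : ℝ) * ((n : ℝ) - 1) * (a ^ θ * b ^ (s - θ))
        + ((n : ℝ) * (s : ℝ) * ((n : ℝ) / q) - (n : ℝ) * s - (n : ℝ) * ((n : ℝ) - 1) * θ) * D := by
    have hcard : ∀ i : Fin n, ((univ.erase i).card : ℝ) = (n : ℝ) - 1 := by
      intro i
      rw [Finset.card_erase_of_mem (Finset.mem_univ i), Finset.card_univ, Fintype.card_fin]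
      push_cast [Nat.cast_sub (by omega : 1 ≤ n)]
      ring
    have hrow : ∀ i : Fin n, ∑ k ∈ univ.erase i,
          (a ^ θ * b ^ (s - θ) + ((coin X i k : ℝ) - θ) * D)
        = ((n : ℝ) - 1) * (a ^ θ * b ^ (s - θ))
          + ((∑ k ∈ univ.erase i, (coin X i k : ℝ)) - ((n : ℝ) - 1) * θ) * D := by
      intro i
      rw [Finset.sum_add_distrib, Finset.sum_const, nsmul_eq_mul, hcard]
      rw [← Finset.sum_mul, Finset.sum_sub_distrib, Finset.sum_const, nsmul_eq_mul, hcard]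
    rw [Finset.sum_congr rfl fun i _ => hrow i, Finset.sum_add_distrib, Finset.sum_const,
      Finset.card_univ, Fintype.card_fin, nsmul_eq_mul, ← Finset.sum_mul,
      Finset.sum_sub_distrib, hcoff, Finset.sum_const, Finset.card_univ, Fintype.card_fin,
      nsmul_eq_mul]
    ring
  -- the lower bound equals the benchmark expression
  have hbench : (n : ℝ) * ((n : ℝ) - 1) * (a ^ θ * b ^ (s - θ))
        + ((n : ℝ) * (s : ℝ) * ((n : ℝ) / q) - (n : ℝ) * s - (n : ℝ) * ((n : ℝ) - 1) * θ) * D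
      = (n : ℝ) * ((n : ℝ) - 1) *
          ((1 - f) * (a ^ θ * b ^ (s - θ)) + f * (a ^ (θ + 1) * b ^ (s - θ - 1))) := by
    have hcoeff : (n : ℝ) * (s : ℝ) * ((n : ℝ) / q) - (n : ℝ) * s - (n : ℝ) * ((n : ℝ) - 1) * θ
        = (n : ℝ) * ((n : ℝ) - 1) * f := by
      rw [hf, hβbar]
      field_simp
      try ring
    rw [hcoeff, hD]
    ring
  rw [hlower, hbench] at hsumbound
  linarith [hsumbound]

lemma bench_zero {n s q θ : ℕ} (f : ℝ) (hn0 : (n : ℝ) ≠ 0) :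
    wlpBenchmark n s q θ f 0 = 1 := by
  rw [wlpBenchmark, kraw_j0, kraw_j0]
  simp only [pow_zero, Nat.choose_zero_right, Nat.cast_one, one_mul, mul_one]
  field_simp
  ring

lemma bench_one {n s q θ : ℕ} {βbar f : ℝ} (hq : 2 ≤ q) (hn : 2 ≤ n)
    (hβbar : βbar = (s : ℝ) * ((n : ℝ) - q) / ((q : ℝ) * ((n : ℝ) - 1)))
    (hf : f = βbar - θ) (hθs : θ + 1 ≤ s) :
    wlpBenchmark n s q θ f 1 = 0 := by
  have hq0 : (q : ℝ) ≠ 0 := by positivity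
  have hn0 : (n : ℝ) ≠ 0 := by positivity
  have hn1 : (n : ℝ) - 1 ≠ 0 := by
    have : (2 : ℝ) ≤ n := by exact_mod_cast hn
    nlinarith
  rw [wlpBenchmark, kraw_j1, kraw_j1, show s - (s - θ) = θ by omega,
    show s - (s - θ - 1) = θ + 1 by omega, Nat.cast_sub (by omega : θ ≤ s),
    show ((s - θ - 1 : ℕ) : ℝ) = (s : ℝ) - θ - 1 by
      rw [show s - θ - 1 = s - (θ + 1) by omega, Nat.cast_sub (by omega : θ + 1 ≤ s)]
      push_cast; ring,
    Nat.choose_one_right, hf, hβbar]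
  push_cast
  field_simp
  ring

lemma gf_nonneg {n s q : ℕ} (hq : 2 ≤ q) (hn : 2 ≤ n) (hs : 2 ≤ s)
    {X : Fin n → Fin s → Fin q} (hX : IsBalanced X)
    {βbar : ℝ} (hβbar : βbar = (s : ℝ) * ((n : ℝ) - q) / ((q : ℝ) * ((n : ℝ) - 1)))
    {θ : ℕ} (hθ : θ = ⌊βbar⌋₊) {f : ℝ} (hf : f = βbar - θ) (hθs : θ + 1 ≤ s)
    (x : ℝ) (hx : x ∈ Set.Ioo (0 : ℝ) 1) :
    0 ≤ ∑ j ∈ range (s + 1), (wlp X j - wlpBenchmark n s q θ f j) * x ^ j := by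
  obtain ⟨hx0, hx1⟩ := hx
  have hq2 : (2 : ℝ) ≤ q := by exact_mod_cast hq
  have hn0 : (n : ℝ) ≠ 0 := by positivity
  have hn2 : (0 : ℝ) < (n : ℝ) ^ 2 := by positivity
  have hb : (0 : ℝ) < 1 - x := by linarith
  have hba : (1 : ℝ) - x ≤ 1 + ((q : ℝ) - 1) * x := by nlinarith
  have hd := gf_design hq X x
  have hbgf := gf_bench (n := n) (q := q) f hθs x
  have hkey := key_ineq hq hn hs hX hβbar hθ hf hθs hb hba
  have h2 : ∑ j ∈ range (s + 1), (wlp X j - wlpBenchmark n s q θ f j) * x ^ j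
      = (∑ j ∈ range (s + 1), wlp X j * x ^ j)
        - ∑ j ∈ range (s + 1), wlpBenchmark n s q θ f j * x ^ j := by
    rw [← Finset.sum_sub_distrib]
    exact Finset.sum_congr rfl fun j _ => by ring
  have h1 : ∑ j ∈ range (s + 1), wlp X j * x ^ j
      = (∑ i : Fin n, ∑ k : Fin n,
          (1 + ((q : ℝ) - 1) * x) ^ coin X i k * (1 - x) ^ (s - coin X i k)) / (n : ℝ) ^ 2 := by
    rw [← hd, Finset.sum_div]
    exact Finset.sum_congr rfl fun j _ => by rw [wlp_eq_Kw]; ring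
  rw [h2, h1, hbgf, sub_nonneg, le_div_iff₀ hn2]
  calc ((1 - 1 / (n : ℝ)) *
          ((1 - f) * ((1 - x) ^ (s - θ) * (1 + ((q : ℝ) - 1) * x) ^ θ)
            + f * ((1 - x) ^ (s - θ - 1) * (1 + ((q : ℝ) - 1) * x) ^ (θ + 1)))
        + (1 + ((q : ℝ) - 1) * x) ^ s / n) * (n : ℝ) ^ 2
      = (n : ℝ) * ((n : ℝ) - 1) *
          ((1 - f) * ((1 + ((q : ℝ) - 1) * x) ^ θ * (1 - x) ^ (s - θ))
            + f * ((1 + ((q : ℝ) - 1) * x) ^ (θ + 1) * (1 - x) ^ (s - θ - 1)))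
        + (n : ℝ) * (1 + ((q : ℝ) - 1) * x) ^ s := by
        field_simp
    _ ≤ _ := hkey

lemma first_coeff_nonneg {c : ℕ → ℝ} {m j₀ : ℕ} (hj : j₀ < m + 1)
    (hzero : ∀ k, k < j₀ → c k = 0)
    (H : ∀ x ∈ Set.Ioo (0 : ℝ) 1, 0 ≤ ∑ j ∈ range (m + 1), c j * x ^ j) :
    0 ≤ c j₀ := by
  set F : ℝ → ℝ := fun x => ∑ i ∈ range (m + 1 - j₀), c (j₀ + i) * x ^ i with hF
  have hsplit : ∀ x : ℝ, ∑ j ∈ range (m + 1), c j * x ^ j = x ^ j₀ * F x := by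
    intro x
    rw [show m + 1 = j₀ + (m + 1 - j₀) by omega, Finset.sum_range_add]
    have h1 : ∑ j ∈ range j₀, c j * x ^ j = 0 :=
      Finset.sum_eq_zero fun j hj => by rw [hzero j (Finset.mem_range.1 hj)]; ring
    rw [h1, zero_add, hF, Finset.mul_sum]
    exact Finset.sum_congr rfl fun i _ => by rw [pow_add]; ring
  have hFnn : ∀ x ∈ Set.Ioo (0 : ℝ) 1, 0 ≤ F x := by
    intro x hx
    have h := H x hx
    rw [hsplit] at h
    have hxp : 0 < x ^ j₀ := pow_pos hx.1 _
    by_contra hc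
    push_neg at hc
    nlinarith
  have hF0 : F 0 = c j₀ := by
    rw [hF]
    simp only
    rw [Finset.sum_eq_single 0]
    · simp
    · intro i _ hi
      rw [zero_pow hi, mul_zero]
    · intro h
      exact absurd (Finset.mem_range.2 (by omega)) h
  have hcont : Continuous F := by
    apply continuous_finset_sum
    intro i _
    exact (continuous_const.mul (continuous_pow i))
  have htend : Filter.Tendsto F (nhdsWithin 0 (Set.Ioo 0 1)) (nhds (c j₀)) := by
    rw [← hF0]
    exact (hcont.continuousAt.tendsto).mono_left nhdsWithin_le_nhds
  have hne : (nhdsWithin (0 : ℝ) (Set.Ioo 0 1)).NeBot := by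
    rw [← mem_closure_iff_nhdsWithin_neBot, closure_Ioo (by norm_num : (0 : ℝ) ≠ 1)]
    exact Set.mem_Icc.2 ⟨le_rfl, by norm_num⟩
  exact ge_of_tendsto htend (Filter.eventually_of_mem self_mem_nhdsWithin hFnn)


/-- Theorem 3 (benchmark for the word-length pattern): the benchmark pattern
(0, A_2*, …, A_s*) is dominated by (0, A_2(X), …, A_s(X)) under the aberration partial
ordering: either all entries agree, or at the first index where they differ,
the benchmark is strictly smaller. -/
theorem wlp_benchmark_aberration (n s q : ℕ) (hq : 2 ≤ q) (hn : 2 ≤ n)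
    (X : Fin n → Fin s → Fin q) (hX : IsBalanced X)
    (βbar : ℝ) (hβbar : βbar = (s : ℝ) * ((n : ℝ) - q) / ((q : ℝ) * ((n : ℝ) - 1)))
    (θ : ℕ) (hθ : θ = ⌊βbar⌋₊)
    (f : ℝ) (hf : f = βbar - θ) :
    (∀ j ∈ Icc 2 s, wlp X j = wlpBenchmark n s q θ f j) ∨
      (∃ j ∈ Icc 2 s, (∀ k ∈ Icc 2 s, k < j → wlp X k = wlpBenchmark n s q θ f k) ∧
        wlp X j ≠ wlpBenchmark n s q θ f j ∧ wlpBenchmark n s q θ f j < wlp X j) := by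
  rcases Nat.lt_or_ge s 2 with hs | hs
  · left
    intro j hj
    rw [Finset.mem_Icc] at hj
    omega
  have hqn : q ≤ n := Nat.le_of_dvd (by omega) hX.1
  have hq0 : (0 : ℝ) < q := by positivity
  have hn0 : (n : ℝ) ≠ 0 := by positivity
  have hqnR : (q : ℝ) ≤ n := by exact_mod_cast hqn
  have hnR : (2 : ℝ) ≤ n := by exact_mod_cast hn
  have hqR : (2 : ℝ) ≤ q := by exact_mod_cast hq
  have hsR : (2 : ℝ) ≤ s := by exact_mod_cast hs
  have hden : (0 : ℝ) < (q : ℝ) * ((n : ℝ) - 1) := by nlinarith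
  have hβnn : 0 ≤ βbar := by
    rw [hβbar]
    apply div_nonneg _ hden.le
    have : (0 : ℝ) ≤ (n : ℝ) - q := by linarith
    positivity
  have hβlt : βbar < s := by
    rw [hβbar, div_lt_iff₀ hden]
    have h1 : (n : ℝ) - q ≤ (n : ℝ) - 1 := by linarith
    have h2 : (n : ℝ) - 1 < (q : ℝ) * ((n : ℝ) - 1) := by nlinarith
    have hs0 : (0 : ℝ) < s := by linarith
    nlinarith [mul_lt_mul_of_pos_left h2 hs0, mul_le_mul_of_nonneg_left h1 (le_of_lt hs0)]
  have hθs : θ + 1 ≤ s := by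
    have h1 : (θ : ℝ) ≤ βbar := hθ ▸ Nat.floor_le hβnn
    have h2 : (θ : ℝ) < s := lt_of_le_of_lt h1 hβlt
    have : θ < s := by exact_mod_cast h2
    omega
  by_cases hall : ∀ j ∈ Icc 2 s, wlp X j = wlpBenchmark n s q θ f j
  · exact Or.inl hall
  right
  push_neg at hall
  obtain ⟨j₁, hj₁, hne₁⟩ := hall
  have hTne : ((Icc 2 s).filter
      (fun j => wlp X j ≠ wlpBenchmark n s q θ f j)).Nonempty :=
    ⟨j₁, Finset.mem_filter.2 ⟨hj₁, hne₁⟩⟩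
  set T := (Icc 2 s).filter (fun j => wlp X j ≠ wlpBenchmark n s q θ f j) with hT
  set j₀ := T.min' hTne with hj₀
  have hj₀T : j₀ ∈ T := T.min'_mem hTne
  have hj₀Icc : j₀ ∈ Icc 2 s := (Finset.mem_filter.1 hj₀T).1
  have hj₀ne : wlp X j₀ ≠ wlpBenchmark n s q θ f j₀ := (Finset.mem_filter.1 hj₀T).2
  have hIcc := Finset.mem_Icc.1 hj₀Icc
  have hmin : ∀ k ∈ Icc 2 s, k < j₀ → wlp X k = wlpBenchmark n s q θ f k := by
    intro k hk hkj
    by_contra hne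
    have hkT : k ∈ T := Finset.mem_filter.2 ⟨hk, hne⟩
    have := T.min'_le k hkT
    omega
  refine ⟨j₀, hj₀Icc, hmin, hj₀ne, ?_⟩
  have hzero : ∀ k, k < j₀ →
      wlp X k - wlpBenchmark n s q θ f k = 0 := by
    intro k hk
    rcases Nat.lt_or_ge k 2 with h2 | h2
    · interval_cases k
      · have hw : wlp X 0 = 1 := by
          rw [wlp_eq_Kw, Kw_zero hq]
          field_simp
        rw [hw, bench_zero f hn0, sub_self]
      · have hw : wlp X 1 = 0 := by
          rw [wlp_eq_Kw, Kw_one hq hX]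
          simp
        rw [hw, bench_one hq hn hβbar hf hθs, sub_self]
    · have hks : k ∈ Icc 2 s := Finset.mem_Icc.2 ⟨h2, by omega⟩
      rw [hmin k hks hk, sub_self]
  have H : ∀ x ∈ Set.Ioo (0 : ℝ) 1,
      0 ≤ ∑ j ∈ range (s + 1),
        (wlp X j - wlpBenchmark n s q θ f j) * x ^ j :=
    fun x hx => gf_nonneg hq hn hs hX hβbar hθ hf hθs x hx
  have h0 : 0 ≤ wlp X j₀ - wlpBenchmark n s q θ f j₀ :=
    first_coeff_nonneg (c := fun j => wlp X j - wlpBenchmark n s q θ f j)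
      (by omega : j₀ < s + 1) hzero H
  have hpos : 0 < wlp X j₀ - wlpBenchmark n s q θ f j₀ :=
    lt_of_le_of_ne h0 (Ne.symm (sub_ne_zero.2 hj₀ne))
  linarith
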